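/- On the polynomial ring P = F[a,b,c,d,e] over a field F of characteristic ≠ 2,3, define the operators L(a) = M_a, L(b) = M_b − M_c D_a + (1/3) M_e D_a D_d, L(c) = M_c, L(d) = M_d − M_e D_c − (1/3) M_e D_a D_b, L(e) = M_e, ρ(a) = −M_c D_b + (1/2) M_e D_b D_d, ρ(b) = M_c D_a − (1/2) M_e D_a D_d, ρ(c) = −M_e D_d, ρ(d) = M_e D_c + (1/2) M_e D_a D_b, ρ(e) = 0. Then the following commutator identities hold (as operators on P): [L(a),L(b)] = M_c − (1/3) M_e D_d, [L(a),L(d)] = (1/3) M_e D_b, [L(b),L(d)] = −(1/3) M_e D_a, [L(c),L(d)] = M_e, [ρ(a),ρ(d)] = M_e D_b, [ρ(b),ρ(d)] = −M_e D_a, [L(a),ρ(b)] = −M_c + (1/2) M_e D_d, [L(a),ρ(d)] = −(1/2) M_e D_b, [L(b),ρ(a)] = M_c − (1/2) M_e D_d, [L(b),ρ(d)] = (1/2) M_e D_a, [L(c),ρ(d)] = −M_e, [L(d),ρ(a)] = (1/2) M_e D_b, [L(d),ρ(b)] = −(1/2) M_e D_a, [L(d),ρ(c)] = M_e, and all other commutators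 among {L(x), ρ(x) : x ∈ {a,b,c,d,e}} vanish. -/
import Mathlib


open MvPolynomial

/-- The five variables `a,b,c,d,e` of `P = F[a,b,c,d,e]`. -/
inductive Var : Type | a | b | c | d | e
deriving DecidableEq

variable (F : Type*) [Field F]

/-- Multiplication by the variable `v` on `P`. -/
noncomputable def Mo (v : Var) : Module.End F (MvPolynomial Var F) :=
  LinearMap.mulLeft F (X v)

/-- Partial differentiation with respect to `v` on `P`. -/
noncomputable def Do (v : Var) : Module.End F (MvPolynomial Var F) :=
  (pderiv v).toLinearMap

/-- The left-multiplication operators `L(x)` of Proposition `abcde-brackets`. -/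
noncomputable def Lop : Var → Module.End F (MvPolynomial Var F)
  | .a => Mo F .a
  | .b => Mo F .b - Mo F .c * Do F .a + (3 : F)⁻¹ • (Mo F .e * Do F .a * Do F .d)
  | .c => Mo F .c
  | .d => Mo F .d - Mo F .e * Do F .c - (3 : F)⁻¹ • (Mo F .e * Do F .a * Do F .b)
  | .e => Mo F .e

/-- The right-bracket operators `ρ(x)` of Proposition `abcde-brackets`. -/
noncomputable def Pop : Var → Module.End F (MvPolynomial Var F)
  | .a => -(Mo F .c * Do F .b) + (2 : F)⁻¹ • (Mo F .e * Do F .b * Do F .d)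
  | .b => Mo F .c * Do F .a - (2 : F)⁻¹ • (Mo F .e * Do F .a * Do F .d)
  | .c => -(Mo F .e * Do F .d)
  | .d => Mo F .e * Do F .c + (2 : F)⁻¹ • (Mo F .e * Do F .a * Do F .b)
  | .e => 0

/-- Table of the commutators `[L(x), L(y)]`. -/
noncomputable def CLL : Var → Var → Module.End F (MvPolynomial Var F)
  | .a, .b => Mo F .c - (3 : F)⁻¹ • (Mo F .e * Do F .d)
  | .b, .a => -(Mo F .c - (3 : F)⁻¹ • (Mo F .e * Do F .d))
  | .a, .d => (3 : F)⁻¹ • (Mo F .e * Do F .b)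
  | .d, .a => -((3 : F)⁻¹ • (Mo F .e * Do F .b))
  | .b, .d => -((3 : F)⁻¹ • (Mo F .e * Do F .a))
  | .d, .b => (3 : F)⁻¹ • (Mo F .e * Do F .a)
  | .c, .d => Mo F .e
  | .d, .c => -(Mo F .e)
  | _, _ => 0

/-- Table of the commutators `[ρ(x), ρ(y)]`. -/
noncomputable def CRR : Var → Var → Module.End F (MvPolynomial Var F)
  | .a, .d => Mo F .e * Do F .b
  | .d, .a => -(Mo F .e * Do F .b)
  | .b, .d => -(Mo F .e * Do F .a)
  | .d, .b => Mo F .e * Do F .a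
  | _, _ => 0

/-- Table of the commutators `[L(x), ρ(y)]`. -/
noncomputable def CLR : Var → Var → Module.End F (MvPolynomial Var F)
  | .a, .b => -(Mo F .c) + (2 : F)⁻¹ • (Mo F .e * Do F .d)
  | .a, .d => -((2 : F)⁻¹ • (Mo F .e * Do F .b))
  | .b, .a => Mo F .c - (2 : F)⁻¹ • (Mo F .e * Do F .d)
  | .b, .d => (2 : F)⁻¹ • (Mo F .e * Do F .a)
  | .c, .d => -(Mo F .e)
  | .d, .a => (2 : F)⁻¹ • (Mo F .e * Do F .b)
  | .d, .b => -((2 : F)⁻¹ • (Mo F .e * Do F .a))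
  | .d, .c => Mo F .e
  | _, _ => 0



lemma pderiv_comm_aux {σ R : Type*} [CommSemiring R] [DecidableEq σ] (i j : σ)
    (p : MvPolynomial σ R) : pderiv i (pderiv j p) = pderiv j (pderiv i p) := by
  induction p using MvPolynomial.induction_on with
  | C a => simp
  | add p q hp hq => simp [hp, hq]
  | mul_X p k hp =>
    rcases eq_or_ne j k with hjk | hjk <;> rcases eq_or_ne i k with hik | hik <;>
      subst_vars <;>
      simp [pderiv_mul, Pi.single_eq_same, Pi.single_eq_of_ne, hp, *] <;>
      ring

section Aux
variable {F}

lemma pba [Field F] (p : MvPolynomial Var F) : pderiv Var.b (pderiv Var.a p) = pderiv Var.a (pderiv Var.b p) := pderiv_comm_aux _ _ _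
lemma pca [Field F] (p : MvPolynomial Var F) : pderiv Var.c (pderiv Var.a p) = pderiv Var.a (pderiv Var.c p) := pderiv_comm_aux _ _ _
lemma pda [Field F] (p : MvPolynomial Var F) : pderiv Var.d (pderiv Var.a p) = pderiv Var.a (pderiv Var.d p) := pderiv_comm_aux _ _ _
lemma pea [Field F] (p : MvPolynomial Var F) : pderiv Var.e (pderiv Var.a p) = pderiv Var.a (pderiv Var.e p) := pderiv_comm_aux _ _ _
lemma pcb [Field F] (p : MvPolynomial Var F) : pderiv Var.c (pderiv Var.b p) = pderiv Var.b (pderiv Var.c p) := pderiv_comm_aux _ _ _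
lemma pdb [Field F] (p : MvPolynomial Var F) : pderiv Var.d (pderiv Var.b p) = pderiv Var.b (pderiv Var.d p) := pderiv_comm_aux _ _ _
lemma peb [Field F] (p : MvPolynomial Var F) : pderiv Var.e (pderiv Var.b p) = pderiv Var.b (pderiv Var.e p) := pderiv_comm_aux _ _ _
lemma pdc [Field F] (p : MvPolynomial Var F) : pderiv Var.d (pderiv Var.c p) = pderiv Var.c (pderiv Var.d p) := pderiv_comm_aux _ _ _
lemma pec [Field F] (p : MvPolynomial Var F) : pderiv Var.e (pderiv Var.c p) = pderiv Var.c (pderiv Var.e p) := pderiv_comm_aux _ _ _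
lemma ped [Field F] (p : MvPolynomial Var F) : pderiv Var.e (pderiv Var.d p) = pderiv Var.d (pderiv Var.e p) := pderiv_comm_aux _ _ _
lemma xsba [Field F] (p : MvPolynomial Var F) : X (Var.b) * (X (Var.a) * p) = X (Var.a) * (X (Var.b) * p) := by ring
lemma xsca [Field F] (p : MvPolynomial Var F) : X (Var.c) * (X (Var.a) * p) = X (Var.a) * (X (Var.c) * p) := by ring
lemma xsda [Field F] (p : MvPolynomial Var F) : X (Var.d) * (X (Var.a) * p) = X (Var.a) * (X (Var.d) * p) := by ring
lemma xsea [Field F] (p : MvPolynomial Var F) : X (Var.e) * (X (Var.a) * p) = X (Var.a) * (X (Var.e) * p) := by ring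
lemma xscb [Field F] (p : MvPolynomial Var F) : X (Var.c) * (X (Var.b) * p) = X (Var.b) * (X (Var.c) * p) := by ring
lemma xsdb [Field F] (p : MvPolynomial Var F) : X (Var.d) * (X (Var.b) * p) = X (Var.b) * (X (Var.d) * p) := by ring
lemma xseb [Field F] (p : MvPolynomial Var F) : X (Var.e) * (X (Var.b) * p) = X (Var.b) * (X (Var.e) * p) := by ring
lemma xsdc [Field F] (p : MvPolynomial Var F) : X (Var.d) * (X (Var.c) * p) = X (Var.c) * (X (Var.d) * p) := by ring
lemma xsec [Field F] (p : MvPolynomial Var F) : X (Var.e) * (X (Var.c) * p) = X (Var.c) * (X (Var.e) * p) := by ring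
lemma xsed [Field F] (p : MvPolynomial Var F) : X (Var.e) * (X (Var.d) * p) = X (Var.d) * (X (Var.e) * p) := by ring

end Aux

set_option maxHeartbeats 1600000 in
/-- Corollary `operatorcommutators`: the complete table of commutators among
the operators `L(x)` and `ρ(x)` for `x ∈ {a,b,c,d,e}`; the listed nonzero
values occur and all other commutators vanish. -/
theorem stmt15 (h2 : ringChar F ≠ 2) (h3 : ringChar F ≠ 3) (x y : Var) :
    Lop F x * Lop F y - Lop F y * Lop F x = CLL F x y ∧
    Pop F x * Pop F y - Pop F y * Pop F x = CRR F x y ∧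
    Lop F x * Pop F y - Pop F y * Lop F x = CLR F x y := by
  have h2' : (2 : F) ≠ 0 := Ring.two_ne_zero h2
  have h3' : (3 : F) ≠ 0 := by
    rw [Ne, (by norm_cast : (3 : F) = ((3 : ℕ) : F)), ringChar.spec,
      Nat.dvd_prime Nat.prime_three]
    exact mt (or_iff_left h3).mp CharP.ringChar_ne_one
  cases x <;> cases y <;> refine ⟨?_, ?_, ?_⟩ <;>
  · refine LinearMap.ext fun p => ?_
    simp only [Lop, Pop, CLL, CRR, CLR, Mo, Do, Module.End.mul_apply, LinearMap.sub_apply,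
      LinearMap.add_apply, LinearMap.smul_apply, LinearMap.neg_apply, LinearMap.zero_apply,
      LinearMap.mulLeft_apply, Derivation.coeFn_coe, pderiv_mul, pderiv_X, pderiv_one,
      Pi.single_apply, map_add, map_sub, map_smul, map_neg, map_zero, pba, pca, pda, pea, pcb, pdb, peb, pdc, pec, ped]
    simp only [reduceCtorEq, if_false, if_true, ite_true, ite_false, mul_zero, zero_mul,
      mul_one, one_mul, add_zero, zero_add, map_zero, smul_zero, if_pos rfl, pderiv_one,
      sub_zero, zero_sub, sub_self, neg_zero, neg_neg, map_neg, map_smul,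
      xsba, xsca, xsda, xsea, xscb, xsdb, xseb, xsdc, xsec, xsed]
    try (match_scalars <;> (try field_simp) <;> (try ring1) <;> (try norm_num))
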